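/- For every continuous progressive simplification S there exists a continuous progressive simplification T such that T is constant on each interval [e_k, e_{k+1}) for k = 1, …, r, and ∫_0^{ε_M} |T(ε)| dε ≤ ∫_0^{ε_M} |S(ε)| dε. In particular, a minimal continuous progressive simplification can be chosen constant between consecutive shortcut error values. -/

import Mathlib

open Metric

noncomputable section

/-- The Euclidean plane. -/
abbrev Pt : Type := EuclideanSpace ℝ (Fin 2)

/-- The subcurve `⟨p i, …, p j⟩`: the union of the segments between consecutive vertices. -/
def subcurve {n : ℕ} (p : Fin n → Pt) (i j : Fin n) : Set Pt :=
  ⋃ (t : Fin n) (_ : i ≤ t ∧ t < j) (h : (t : ℕ) + 1 < n),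
    segment ℝ (p t) (p ⟨(t : ℕ) + 1, h⟩)

/-- The (Hausdorff-distance) error of the shortcut `(i, j)`. -/
def err {n : ℕ} (p : Fin n → Pt) (i j : Fin n) : ℝ :=
  Metric.hausdorffDist (segment ℝ (p i) (p j)) (subcurve p i j)

/-- The edges (consecutive pairs) of a path given as a list of vertices. -/
def edges {n : ℕ} (l : List (Fin n)) : List (Fin n × Fin n) := l.zip l.tail

/-- `l` is a path from `i` to `j` at tolerance `ε`: a strictly increasing sequence of
indices starting at `i`, ending at `j`, all of whose edges are valid shortcuts for `ε`. -/
def IsPath {n : ℕ} (p : Fin n → Pt) (ε : ℝ) (i j : Fin n) (l : List (Fin n)) : Prop :=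
  l.Chain' (· < ·) ∧ l.head? = some i ∧ l.getLast? = some j ∧
    ∀ e ∈ edges l, err p e.1 e.2 ≤ ε

/-- The cost of a path: the sum of the costs of its edges. -/
def pathCost {n : ℕ} {α : Type*} [AddCommMonoid α] (c : Fin n → Fin n → α)
    (l : List (Fin n)) : α :=
  ((edges l).map (fun e => c e.1 e.2)).sum

/-- Minimum cost (natural-valued) of a path from `i` to `j` at tolerance `ε`. -/
def minCost {n : ℕ} (p : Fin n → Pt) (ε : ℝ) (c : Fin n → Fin n → ℕ) (i j : Fin n) : ℕ :=
  sInf {s : ℕ | ∃ l, IsPath p ε i j l ∧ pathCost c l = s}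

/-- Minimum cost (real-valued) of a path from `i` to `j` at tolerance `ε`. -/
def minCostR {n : ℕ} (p : Fin n → Pt) (ε : ℝ) (c : Fin n → Fin n → ℝ) (i j : Fin n) : ℝ :=
  sInf {s : ℝ | ∃ l, IsPath p ε i j l ∧ pathCost c l = s}

/-- `l` is a minimum-cost path from `i` to `j` at tolerance `ε` w.r.t. cost `c`. -/
def IsMinPath {n : ℕ} (p : Fin n → Pt) (ε : ℝ) (c : Fin n → Fin n → ℕ) (i j : Fin n)
    (l : List (Fin n)) : Prop :=
  IsPath p ε i j l ∧ ∀ l', IsPath p ε i j l' → pathCost c l ≤ pathCost c l'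

/-- `L'` is obtained from `L` by replacing each edge `(i, j)` of `L` by a minimum-cost
path from `i` to `j` at tolerance `ε`, and concatenating. -/
def Refines {n : ℕ} (p : Fin n → Pt) (ε : ℝ) (c : Fin n → Fin n → ℕ)
    (L L' : List (Fin n)) : Prop :=
  ∃ f : Fin n × Fin n → List (Fin n),
    (∀ e ∈ edges L, IsMinPath p ε c e.1 e.2 (f e)) ∧
    L' = L.take 1 ++ ((edges L).map (fun e => (f e).tail)).flatten

/-- `S 1, …, S m` is a progressive simplification for the tolerances `ε 1 < … < ε m`:
each `S k` is an `ε k`-simplification (a path from `v0` to `v1`), and every vertex of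
`S (k+1)` is a vertex of `S k`. -/
def ProgSimp {n : ℕ} (p : Fin n → Pt) (m : ℕ) (ε : ℕ → ℝ) (v0 v1 : Fin n)
    (S : ℕ → List (Fin n)) : Prop :=
  (∀ k, 1 ≤ k → k ≤ m → IsPath p (ε k) v0 v1 (S k)) ∧
  (∀ k, 1 ≤ k → k < m → ∀ v ∈ S (k + 1), v ∈ S k)

/-- A continuous progressive simplification on `[0, εM)`: `S ε` is an `ε`-simplification
for every `0 ≤ ε < εM`, and every vertex of `S ε'` is a vertex of `S ε` whenever
`ε ≤ ε'`. -/
def ContProgSimp {n : ℕ} (p : Fin n → Pt) (εM : ℝ) (v0 v1 : Fin n)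
    (S : ℝ → List (Fin n)) : Prop :=
  (∀ x : ℝ, 0 ≤ x → x < εM → IsPath p x v0 v1 (S x)) ∧
  (∀ x x' : ℝ, 0 ≤ x → x ≤ x' → x' < εM → ∀ v ∈ S x', v ∈ S x)


/-- Every edge of a list satisfying `Chain' R` relates its endpoints. -/
lemma edges_of_chain' {n : ℕ} {R : Fin n → Fin n → Prop} :
    ∀ {l : List (Fin n)}, l.Chain' R → ∀ ed ∈ edges l, R ed.1 ed.2
  | [], _, ed, hed => by simp [edges] at hed
  | [a], _, ed, hed => by simp [edges] at hed
  | a :: b :: t, h, ed, hed => by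
    replace h := List.isChain_cons_cons.mp h
    have : edges (a :: b :: t) = (a, b) :: edges (b :: t) := rfl
    rw [this, List.mem_cons] at hed
    rcases hed with rfl | hed
    · exact h.1
    · exact edges_of_chain' h.2 ed hed

/-- Every continuous progressive simplification can be replaced, without
increasing the integral of its size, by one that is constant on each interval
`[e k, e (k+1))` between consecutive shortcut error values. -/
theorem continuous_progressive_stepwise {n : ℕ} (hn : 2 ≤ n) (p : Fin n → Pt)
    (εM : ℝ)
    (hεM : εM = err p (⟨0, by omega⟩ : Fin n) (⟨n - 1, by omega⟩ : Fin n))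
    (hεMpos : 0 < εM)
    (r : ℕ) (hr : 1 ≤ r) (e : ℕ → ℝ)
    (hemono : ∀ k, 1 ≤ k → k ≤ r → e k < e (k + 1))
    (hetop : e (r + 1) = εM)
    (heset : {x : ℝ | (∃ i j : Fin n, i < j ∧ err p i j = x) ∧ x < εM} =
      {x : ℝ | ∃ k, 1 ≤ k ∧ k ≤ r ∧ e k = x})
    (S : ℝ → List (Fin n))
    (hS : ContProgSimp p εM (⟨0, by omega⟩ : Fin n) (⟨n - 1, by omega⟩ : Fin n) S) :
    ∃ T : ℝ → List (Fin n),
      ContProgSimp p εM (⟨0, by omega⟩ : Fin n) (⟨n - 1, by omega⟩ : Fin n) T ∧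
      (∀ k, 1 ≤ k → k ≤ r → ∀ x : ℝ, e k ≤ x → x < e (k + 1) → T x = T (e k)) ∧
      (∫ x in (0:ℝ)..εM, ((T x).length : ℝ)) ≤ ∫ x in (0:ℝ)..εM, ((S x).length : ℝ) := by
  
  classical
  obtain ⟨hS1, hS2⟩ := hS
  have hkey := Set.ext_iff.mp heset
  have he_nonneg : ∀ k, 1 ≤ k → k ≤ r → 0 ≤ e k := by
    intro k h1 h2
    obtain ⟨⟨i, j, hij, hx⟩, _⟩ := (hkey (e k)).mpr ⟨k, h1, h2, rfl⟩
    rw [← hx]; exact Metric.hausdorffDist_nonneg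
  have emono : ∀ k, k ≤ r + 1 → ∀ j, 1 ≤ j → j ≤ k → e j ≤ e k := by
    intro k
    induction k with
    | zero => intro _ j h1 h2; omega
    | succ k ih =>
      intro hk j h1 hj
      rcases Nat.lt_or_ge j (k + 1) with h | h
      · exact le_trans (ih (by omega) j h1 (by omega))
          (le_of_lt (hemono k (by omega) (by omega)))
      · have : j = k + 1 := by omega
        subst this; exact le_rfl
  -- the error of a consecutive shortcut is zero
  have hcons : err p (⟨0, by omega⟩ : Fin n) (⟨1, by omega⟩ : Fin n) = 0 := by
    have hsub : subcurve p (⟨0, by omega⟩ : Fin n) (⟨1, by omega⟩ : Fin n) =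
        segment ℝ (p ⟨0, by omega⟩) (p ⟨1, by omega⟩) := by
      apply subset_antisymm
      · refine Set.iUnion_subset fun t => Set.iUnion_subset fun ht =>
          Set.iUnion_subset fun h => ?_
        have hval : (t : ℕ) = 0 := by
          have h2 : (t : ℕ) < 1 := ht.2
          omega
        have hmk : (⟨(t : ℕ) + 1, h⟩ : Fin n) = ⟨1, by omega⟩ :=
          Fin.ext (by show (t : ℕ) + 1 = 1; omega)
        have ht0 : t = (⟨0, by omega⟩ : Fin n) := Fin.ext hval
        rw [hmk, ht0]
      · intro x hx
        refine Set.mem_iUnion.mpr ⟨⟨0, by omega⟩, Set.mem_iUnion.mpr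
          ⟨⟨le_rfl, Fin.mk_lt_mk.mpr one_pos⟩,
            Set.mem_iUnion.mpr ⟨show (0 : ℕ) + 1 < n by omega, hx⟩⟩⟩
    rw [err, hsub]; exact Metric.hausdorffDist_self_zero
  have he1 : e 1 = 0 := by
    obtain ⟨k, hk1, hkr, hk0⟩ := (hkey 0).mp
      ⟨⟨⟨0, by omega⟩, ⟨1, by omega⟩, Fin.mk_lt_mk.mpr one_pos, hcons⟩, hεMpos⟩
    have h1 := he_nonneg 1 le_rfl hr
    have h2 := emono k (by omega) 1 le_rfl hk1
    linarith
  -- the index function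
  set K : ℝ → ℕ := fun x => max 1 (Nat.findGreatest (fun k => e k ≤ x) r) with hKdef
  have hK1 : ∀ x, 1 ≤ K x := fun x => le_max_left _ _
  have hKr : ∀ x, K x ≤ r := fun x => max_le hr (Nat.findGreatest_le r)
  have hKle : ∀ x, 0 ≤ x → e (K x) ≤ x := by
    intro x hx
    have h1 : e 1 ≤ x := by rw [he1]; exact hx
    have hfg : 1 ≤ Nat.findGreatest (fun k => e k ≤ x) r :=
      Nat.le_findGreatest (P := fun k => e k ≤ x) hr h1
    have hKx : K x = Nat.findGreatest (fun k => e k ≤ x) r := max_eq_right hfg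
    rw [hKx]; exact Nat.findGreatest_spec (P := fun k => e k ≤ x) hr h1
  have hKge : ∀ (x : ℝ) k, 1 ≤ k → k ≤ r → e k ≤ x → k ≤ K x := fun x k _ h2 h3 =>
    le_trans (Nat.le_findGreatest (P := fun k => e k ≤ x) h2 h3) (le_max_right _ _)
  have hKlt : ∀ x, 0 ≤ x → x < εM → x < e (K x + 1) := by
    intro x hx hxM
    rcases Nat.lt_or_ge (K x) r with h | h
    · by_contra hcon; push_neg at hcon
      have := hKge x (K x + 1) (by omega) (by omega) hcon
      omega
    · have hKx : K x = r := le_antisymm (hKr x) h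
      rw [hKx, hetop]; exact hxM
  have hKmono : ∀ x x' : ℝ, 0 ≤ x → x ≤ x' → K x ≤ K x' := fun x x' hx hxx' =>
    hKge x' (K x) (hK1 x) (hKr x) (le_trans (hKle x hx) hxx')
  have hKeq : ∀ k, 1 ≤ k → k ≤ r → ∀ x : ℝ, e k ≤ x → x < e (k + 1) → K x = k := by
    intro k h1 h2 x hx1 hx2
    have hx0 : 0 ≤ x := le_trans (he_nonneg k h1 h2) hx1
    have hge := hKge x k h1 h2 hx1
    have hle : K x ≤ k := by
      by_contra h; push_neg at h
      have h3 := emono (K x) (by have := hKr x; omega) (k + 1) (by omega) h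
      linarith [hKle x hx0]
    omega
  -- choose a minimiser of the size on each interval
  have hexy : ∀ k, ∃ y : ℝ, 1 ≤ k → k ≤ r →
      e k ≤ y ∧ y < e (k + 1) ∧
      ∀ z : ℝ, e k ≤ z → z < e (k + 1) → (S y).length ≤ (S z).length := by
    intro k
    by_cases hk : 1 ≤ k ∧ k ≤ r
    · obtain ⟨h1, h2⟩ := hk
      have hne : ((fun z => (S z).length) '' Set.Ico (e k) (e (k + 1))).Nonempty :=
        ⟨(S (e k)).length, ⟨e k, ⟨le_rfl, hemono k h1 h2⟩, rfl⟩⟩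
      obtain ⟨y, hyI, hylen⟩ := Nat.sInf_mem hne
      refine ⟨y, fun _ _ => ⟨hyI.1, hyI.2, fun z hz1 hz2 => ?_⟩⟩
      have hylen' : (S y).length =
          sInf ((fun z => (S z).length) '' Set.Ico (e k) (e (k + 1))) := hylen
      rw [hylen']
      exact Nat.sInf_le ⟨z, ⟨hz1, hz2⟩, rfl⟩
    · exact ⟨0, fun h1 h2 => absurd ⟨h1, h2⟩ hk⟩
  choose y hy using hexy
  have hy0 : ∀ k, 1 ≤ k → k ≤ r → 0 ≤ y k := fun k h1 h2 =>
    le_trans (he_nonneg k h1 h2) (hy k h1 h2).1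
  have hyM : ∀ k, 1 ≤ k → k ≤ r → y k < εM := fun k h1 h2 =>
    lt_of_lt_of_le (hy k h1 h2).2.1
      (by rw [← hetop]; exact emono (r + 1) le_rfl (k + 1) (by omega) (by omega))
  have hymono : ∀ j k, 1 ≤ j → j ≤ k → k ≤ r → y j ≤ y k := by
    intro j k h1 hjk h2
    rcases eq_or_lt_of_le hjk with rfl | h
    · exact le_rfl
    · calc y j ≤ e (j + 1) := le_of_lt (hy j h1 (by omega)).2.1
        _ ≤ e k := emono k (by omega) (j + 1) (by omega) h
        _ ≤ y k := (hy k (by omega) h2).1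
  -- sizes of S are antitone
  have hSnodup : ∀ x : ℝ, 0 ≤ x → x < εM → (S x).Nodup := by
    intro x h1 h2
    have hch := (hS1 x h1 h2).1
    exact ((List.isChain_iff_pairwise.mp hch).imp fun h => ne_of_lt h)
  have hSanti : ∀ a b : ℝ, 0 ≤ a → a ≤ b → b < εM → (S b).length ≤ (S a).length :=
    fun a b h1 h2 h3 =>
      ((hSnodup b (le_trans h1 h2) h3).subperm (fun v hv => hS2 a b h1 h2 h3 v hv)).length_le
  refine ⟨fun x => S (y (K x)), ⟨?_, ?_⟩, ?_, ?_⟩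
  · -- IsPath
    intro x hx hxM
    have hk1 := hK1 x
    have hkr := hKr x
    have hp := hS1 (y (K x)) (hy0 _ hk1 hkr) (hyM _ hk1 hkr)
    refine ⟨hp.1, hp.2.1, hp.2.2.1, ?_⟩
    intro ed hed
    have hlt : ed.1 < ed.2 := edges_of_chain' hp.1 ed hed
    have herr := hp.2.2.2 ed hed
    have herrM : err p ed.1 ed.2 < εM := lt_of_le_of_lt herr (hyM _ hk1 hkr)
    obtain ⟨j, hj1, hjr, hje⟩ := (hkey _).mp ⟨⟨ed.1, ed.2, hlt, rfl⟩, herrM⟩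
    have hjk : j ≤ K x := by
      by_contra h; push_neg at h
      have h3 := emono j (by omega) (K x + 1) (by omega) h
      have h4 := (hy (K x) hk1 hkr).2.1
      rw [hje] at h3
      linarith
    calc err p ed.1 ed.2 = e j := hje.symm
      _ ≤ e (K x) := emono (K x) (by omega) j hj1 hjk
      _ ≤ x := hKle x hx
  · -- progressive
    intro x x' hx hxx' hx' v hv
    have h1 := hKmono x x' hx hxx'
    exact hS2 (y (K x)) (y (K x')) (hy0 _ (hK1 x) (hKr x))
      (hymono (K x) (K x') (hK1 x) h1 (hKr x')) (hyM _ (hK1 x') (hKr x')) v hv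
  · -- constancy on the intervals
    intro k h1 h2 x hx1 hx2
    show S (y (K x)) = S (y (K (e k)))
    rw [hKeq k h1 h2 x hx1 hx2, hKeq k h1 h2 (e k) le_rfl (hemono k h1 h2)]
  · -- the integral inequality
    set fT : ℝ → ℝ := fun x => if x < εM then ((S (y (K x))).length : ℝ) else 0 with hfT
    set fS : ℝ → ℝ := fun x => if x < εM then ((S x).length : ℝ) else 0 with hfS
    have hae : ∀ᵐ x : ℝ, x ≠ εM := by
      have hsing : {x : ℝ | ¬x ≠ εM} = {εM} := by ext z; simp
      rw [MeasureTheory.ae_iff, hsing]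
      exact MeasureTheory.measure_singleton εM
    have hcongrT : (∫ x in (0:ℝ)..εM, ((S (y (K x))).length : ℝ)) = ∫ x in (0:ℝ)..εM, fT x := by
      refine intervalIntegral.integral_congr_ae (hae.mono fun x hx hxI => ?_)
      rw [Set.uIoc_of_le hεMpos.le] at hxI
      have hxM : x < εM := lt_of_le_of_ne hxI.2 hx
      simp [hfT, hxM]
    have hcongrS : (∫ x in (0:ℝ)..εM, ((S x).length : ℝ)) = ∫ x in (0:ℝ)..εM, fS x := by
      refine intervalIntegral.integral_congr_ae (hae.mono fun x hx hxI => ?_)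
      rw [Set.uIoc_of_le hεMpos.le] at hxI
      have hxM : x < εM := lt_of_le_of_ne hxI.2 hx
      simp [hfS, hxM]
    have hTanti : AntitoneOn fT (Set.uIcc 0 εM) := by
      rw [Set.uIcc_of_le hεMpos.le]
      intro a ha b hb hab
      by_cases hbM : b < εM
      · have haM : a < εM := lt_of_le_of_lt hab hbM
        simp only [hfT, if_pos hbM, if_pos haM]
        have h1 := hKmono a b ha.1 hab
        exact_mod_cast hSanti (y (K a)) (y (K b)) (hy0 _ (hK1 a) (hKr a))
          (hymono (K a) (K b) (hK1 a) h1 (hKr b)) (hyM _ (hK1 b) (hKr b))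
      · simp only [hfT, if_neg hbM]
        split <;> positivity
    have hSanti' : AntitoneOn fS (Set.uIcc 0 εM) := by
      rw [Set.uIcc_of_le hεMpos.le]
      intro a ha b hb hab
      by_cases hbM : b < εM
      · have haM : a < εM := lt_of_le_of_lt hab hbM
        simp only [hfS, if_pos hbM, if_pos haM]
        exact_mod_cast hSanti a b ha.1 hab hbM
      · simp only [hfS, if_neg hbM]
        split <;> positivity
    have hle : ∀ x ∈ Set.Icc (0:ℝ) εM, fT x ≤ fS x := by
      intro x hx
      by_cases hxM : x < εM
      · simp only [hfT, hfS, if_pos hxM]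
        exact_mod_cast (hy (K x) (hK1 x) (hKr x)).2.2 x (hKle x hx.1) (hKlt x hx.1 hxM)
      · simp [hfT, hfS, hxM]
    calc (∫ x in (0:ℝ)..εM, ((S (y (K x))).length : ℝ)) = ∫ x in (0:ℝ)..εM, fT x := hcongrT
      _ ≤ ∫ x in (0:ℝ)..εM, fS x :=
          intervalIntegral.integral_mono_on hεMpos.le hTanti.intervalIntegrable
            hSanti'.intervalIntegrable hle
      _ = ∫ x in (0:ℝ)..εM, ((S x).length : ℝ) := hcongrS.symm
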